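/- If S is an exponentially independent set of vertices of the infinite cubic tree T_∞, then for every vertex u in S there exists a vertex v in S with f(v,S) ≥ 2·f(u,S). -/

import Mathlib

open SimpleGraph
open scoped Classical ENNReal

/-- The graph obtained from `G` by deleting the vertices of `A`
(they are kept as isolated vertices, which does not affect adjacency or distances
among the remaining vertices). -/
def SimpleGraph.deleteSet {V : Type*} (G : SimpleGraph V) (A : Set V) : SimpleGraph V where
  Adj x y := G.Adj x y ∧ x ∉ A ∧ y ∉ A
  symm := ⟨fun _ _ ⟨h, hx, hy⟩ => ⟨h.symm, hy, hx⟩⟩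
  loopless := ⟨fun x ⟨h, _, _⟩ => G.loopless.irrefl x h⟩

/-- `dist_{(G,S)}(u,v)`: the distance between `u` and `v` in `G - (S \ {u,v})`,
with value `⊤` if there is no path between `u` and `v` in that graph. -/
noncomputable def distDel {V : Type*} (G : SimpleGraph V) (S : Set V) (u v : V) : ℕ∞ :=
  (G.deleteSet (S \ {u, v})).edist u v

/-- `w_{(G,S)}(u) = Σ_{v ∈ S} (1/2)^{dist_{(G,S)}(u,v) - 1}`, a sum with values in `[0,∞]`
in which a summand with infinite distance equals `0`. -/
noncomputable def expWSet {V : Type*} (G : SimpleGraph V) (S : Set V) (u : V) : ℝ≥0∞ :=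
  ∑' v : S, if distDel G S u (v : V) = ⊤ then 0
    else 2 * (2⁻¹ : ℝ≥0∞) ^ (distDel G S u (v : V)).toNat

/-- `S` is exponentially independent in `G`: `w_{(G,S∖{u})}(u) < 1` for every `u ∈ S`. -/
def ExpIndepSet {V : Type*} (G : SimpleGraph V) (S : Set V) : Prop :=
  ∀ u ∈ S, expWSet G (S \ {u}) u < 1

/-- `G` is an infinite cubic tree: a connected acyclic graph on a countably infinite
vertex set in which every vertex has degree `3`. -/
def IsInfCubicTree {V : Type*} (G : SimpleGraph V) : Prop :=
  Countable V ∧ Infinite V ∧ G.Connected ∧ G.IsAcyclic ∧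
    ∀ v : V, (G.neighborSet v).encard = 3

/-- `f(u,S) = limsup_{k→∞} |S ∩ B^k(u)| / |B^k(u)|`, where `B^k(u)` is the ball of
radius `k` around `u`, of cardinality `3·2^k - 2` in the infinite cubic tree. -/
noncomputable def ballDensity {V : Type*} (G : SimpleGraph V) (S : Set V) (u : V) : ℝ :=
  Filter.limsup (fun k : ℕ =>
    ((S ∩ {v : V | G.edist u v ≤ (k : ℕ∞)}).ncard : ℝ) / (3 * 2 ^ k - 2)) Filter.atTop

section AuxLemmas

variable {V : Type*} {G : SimpleGraph V} {u v x : V} {S : Set V}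

private lemma edist_le_iff_dist_le (hr : G.Reachable u v) {k : ℕ} :
    G.edist u v ≤ (k : ℕ∞) ↔ G.dist u v ≤ k := by
  have hne : G.edist u v ≠ ⊤ := SimpleGraph.edist_ne_top_iff_reachable.mpr hr
  constructor
  · intro h
    have := ENat.toNat_le_toNat h (by simp)
    simpa [SimpleGraph.dist] using this
  · intro h
    rw [← ENat.coe_toNat hne]
    exact_mod_cast h

private lemma exists_parent (hc : G.Connected) {u x : V} {m : ℕ} (h : G.dist u x = m + 1) :
    ∃ y, G.Adj y x ∧ G.dist u y = m := by
  obtain ⟨p, hp⟩ := (hc u x).exists_walk_length_eq_dist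
  have hxu : x ≠ u := by
    rintro rfl
    simp [SimpleGraph.dist_self] at h
  rcases p.reverse.exists_eq_cons_of_ne hxu with ⟨y, hadj, r, hq⟩
  have hlen : r.length = m := by
    have := congrArg SimpleGraph.Walk.length hq
    simp [SimpleGraph.Walk.length_reverse, hp, h] at this
    omega
  refine ⟨y, hadj.symm, le_antisymm ?_ ?_⟩
  · calc G.dist u y ≤ r.reverse.length := SimpleGraph.dist_le _
    _ = m := by simp [hlen]
  · have h1 : G.dist y x = 1 := SimpleGraph.dist_eq_one_iff_adj.mpr hadj.symm
    have := hc.dist_triangle (u := u) (v := y) (w := x)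
    omega

private lemma ncard_biUnion_le' {ι : Type*} (s : Finset ι) (f : ι → Set V)
    (hf : ∀ i ∈ s, (f i).Finite) :
    (⋃ i ∈ s, f i).Finite ∧ (⋃ i ∈ s, f i).ncard ≤ ∑ i ∈ s, (f i).ncard := by
  classical
  induction s using Finset.induction with
  | empty => simp
  | @insert a s ha ih =>
    have hfa : (f a).Finite := hf a (by simp)
    have hrest := ih (fun i hi => hf i (by simp [hi]))
    have hU : (⋃ i ∈ insert a s, f i) = f a ∪ ⋃ i ∈ s, f i := by
      simp [Set.biUnion_insert]
    constructor
    · rw [hU]; exact hfa.union hrest.1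
    · rw [hU, Finset.sum_insert ha]
      calc (f a ∪ ⋃ i ∈ s, f i).ncard ≤ (f a).ncard + (⋃ i ∈ s, f i).ncard :=
            Set.ncard_union_le _ _
        _ ≤ _ := Nat.add_le_add_left hrest.2 _

private lemma neighborSet_finite_of_deg3 (hdeg : ∀ v : V, (G.neighborSet v).encard = 3)
    (v : V) : (G.neighborSet v).Finite := by
  apply Set.finite_of_encard_eq_coe (k := 3)
  rw [hdeg v]; norm_cast

private lemma neighborSet_ncard_of_deg3 (hdeg : ∀ v : V, (G.neighborSet v).encard = 3)
    (v : V) : (G.neighborSet v).ncard = 3 := by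
  rw [Set.ncard_def, hdeg v]; rfl

private lemma sphere_bound (hc : G.Connected) (hdeg : ∀ v : V, (G.neighborSet v).encard = 3)
    (u : V) :
    ∀ m : ℕ, {x | G.dist u x = m}.Finite ∧
      ({x | G.dist u x = m}).ncard ≤ (if m = 0 then 1 else 3 * 2 ^ (m - 1)) := by
  intro m
  induction m with
  | zero =>
    have h0 : {x | G.dist u x = 0} = {u} := by
      ext x
      simp only [Set.mem_setOf_eq, Set.mem_singleton_iff]
      rw [hc.dist_eq_zero_iff]
      exact eq_comm
    rw [h0]
    simp
  | succ m ih =>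
    have hcover : {x | G.dist u x = m + 1} ⊆
        ⋃ y ∈ ih.1.toFinset, (G.neighborSet y ∩ {x | G.dist u x = m + 1}) := by
      intro x hx
      obtain ⟨y, hyx, hy⟩ := exists_parent hc hx
      simp only [Set.mem_iUnion, Set.Finite.mem_toFinset]
      exact ⟨y, hy, (SimpleGraph.mem_neighborSet _ _ _).mpr hyx, hx⟩
    have hpiece : ∀ y ∈ ih.1.toFinset,
        (G.neighborSet y ∩ {x | G.dist u x = m + 1}).Finite ∧
        (G.neighborSet y ∩ {x | G.dist u x = m + 1}).ncard ≤ (if m = 0 then 3 else 2) := by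
      intro y hy
      have hNfin := neighborSet_finite_of_deg3 hdeg y
      refine ⟨hNfin.inter_of_left _, ?_⟩
      by_cases hm : m = 0
      · subst hm
        simp only [if_pos rfl]
        calc (G.neighborSet y ∩ _).ncard ≤ (G.neighborSet y).ncard :=
              Set.ncard_le_ncard Set.inter_subset_left hNfin
          _ = 3 := neighborSet_ncard_of_deg3 hdeg y
      · obtain ⟨m', rfl⟩ : ∃ m', m = m' + 1 := ⟨m - 1, by omega⟩
        simp only [Set.Finite.mem_toFinset, Set.mem_setOf_eq] at hy
        obtain ⟨p, hpy, hp⟩ := exists_parent hc hy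
        have hsub : G.neighborSet y ∩ {x | G.dist u x = m' + 1 + 1} ⊆
            G.neighborSet y \ {p} := by
          rintro x ⟨hx1, hx2⟩
          refine ⟨hx1, ?_⟩
          simp only [Set.mem_singleton_iff]
          rintro rfl
          simp only [Set.mem_setOf_eq] at hx2
          omega
        have hpN : p ∈ G.neighborSet y := hpy.symm
        have hcard : (G.neighborSet y \ {p}).encard = 2 := by
          rw [Set.encard_diff_singleton_of_mem hpN, hdeg y]
          rfl
        have hcard' : (G.neighborSet y \ {p}).ncard = 2 := by
          rw [Set.ncard_def, hcard]
          rfl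
        simp only [if_neg (by omega : ¬ (m' + 1 = 0))]
        calc (G.neighborSet y ∩ {x | G.dist u x = m' + 1 + 1}).ncard
            ≤ (G.neighborSet y \ {p}).ncard :=
              Set.ncard_le_ncard hsub hNfin.diff
          _ = 2 := hcard'
    obtain ⟨hUfin, hUcard⟩ := ncard_biUnion_le' ih.1.toFinset _ (fun y hy => (hpiece y hy).1)
    have hfin : {x | G.dist u x = m + 1}.Finite := hUfin.subset hcover
    refine ⟨hfin, ?_⟩
    have hsum : ∑ y ∈ ih.1.toFinset, (G.neighborSet y ∩ {x | G.dist u x = m + 1}).ncard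
        ≤ ih.1.toFinset.card * (if m = 0 then 3 else 2) := by
      calc _ ≤ ∑ _y ∈ ih.1.toFinset, (if m = 0 then 3 else 2) :=
            Finset.sum_le_sum (fun y hy => (hpiece y hy).2)
        _ = _ := by rw [Finset.sum_const, smul_eq_mul]
    have hcardsp : ih.1.toFinset.card = ({x | G.dist u x = m}).ncard :=
      (Set.ncard_eq_toFinset_card _ ih.1).symm
    have h1 : ({x | G.dist u x = m + 1}).ncard ≤
        ({x | G.dist u x = m}).ncard * (if m = 0 then 3 else 2) := by
      calc ({x | G.dist u x = m + 1}).ncard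
          ≤ (⋃ y ∈ ih.1.toFinset, (G.neighborSet y ∩ {x | G.dist u x = m + 1})).ncard :=
            Set.ncard_le_ncard hcover hUfin
        _ ≤ _ := hUcard
        _ ≤ _ := by rw [hcardsp] at hsum; exact hsum
    have h2 := ih.2
    by_cases hm : m = 0
    · subst hm
      simp only [if_pos rfl] at h1 h2 ⊢
      simp only [if_neg (by omega : ¬ (0 + 1 = 0))]
      calc _ ≤ _ := h1
        _ ≤ 1 * 3 := Nat.mul_le_mul_right _ h2
        _ = 3 * 2 ^ (0 + 1 - 1) := by norm_num
    · simp only [if_neg hm] at h1 h2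
      simp only [if_neg (by omega : ¬ (m + 1 = 0))]
      calc _ ≤ _ := h1
        _ ≤ (3 * 2 ^ (m - 1)) * 2 := Nat.mul_le_mul_right _ h2
        _ ≤ 3 * 2 ^ (m + 1 - 1) := by
            have hmm : m + 1 - 1 = (m - 1) + 1 := by omega
            rw [mul_assoc, ← pow_succ, hmm]

private lemma ball_bound (hc : G.Connected) (hdeg : ∀ v : V, (G.neighborSet v).encard = 3)
    (u : V) :
    ∀ k : ℕ, {x | G.dist u x ≤ k}.Finite ∧
      ({x | G.dist u x ≤ k}).ncard + 2 ≤ 3 * 2 ^ k := by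
  intro k
  induction k with
  | zero =>
    have h0 : {x | G.dist u x ≤ 0} = {u} := by
      ext x
      simp only [Set.mem_setOf_eq, Set.mem_singleton_iff, Nat.le_zero]
      rw [hc.dist_eq_zero_iff]
      exact eq_comm
    rw [h0]
    simp
  | succ k ih =>
    have hsp := sphere_bound hc hdeg u (k + 1)
    have hU : {x | G.dist u x ≤ k + 1} = {x | G.dist u x ≤ k} ∪ {x | G.dist u x = k + 1} := by
      ext x
      simp only [Set.mem_setOf_eq, Set.mem_union]
      omega
    refine ⟨by rw [hU]; exact ih.1.union hsp.1, ?_⟩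
    have hle : ({x | G.dist u x ≤ k + 1}).ncard ≤
        ({x | G.dist u x ≤ k}).ncard + ({x | G.dist u x = k + 1}).ncard := by
      rw [hU]; exact Set.ncard_union_le _ _
    have h2 := hsp.2
    simp only [if_neg (by omega : ¬ (k + 1 = 0)), Nat.add_sub_cancel] at h2
    have : (3:ℕ) * 2 ^ (k+1) = 3 * 2 ^ k + 3 * 2 ^ k := by ring
    omega

private lemma walk_proj (S : Set V) : ∀ {w x : V} (p : G.Walk w x), x ∈ S → x ≠ w →
    ∃ v ∈ S, ∃ q : G.Walk w v, (∀ y, y ∈ q.support → y ∈ p.support) ∧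
      (∀ y ∈ q.support, y = w ∨ y = v ∨ y ∉ S) ∧ q.length + G.dist v x ≤ p.length := by
  intro w x p
  induction p with
  | nil =>
    intro hx hne
    exact absurd rfl hne
  | @cons w b x h p' ih =>
    intro hx hne
    by_cases hb : b ∈ S
    · refine ⟨b, hb, SimpleGraph.Walk.cons h SimpleGraph.Walk.nil, ?_, ?_, ?_⟩
      · intro y hy
        simp only [SimpleGraph.Walk.support_cons, SimpleGraph.Walk.support_nil,
          List.mem_cons, List.mem_singleton, List.not_mem_nil, or_false] at hy
        rcases hy with rfl | rfl
        · exact SimpleGraph.Walk.start_mem_support _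
        · simp [SimpleGraph.Walk.support_cons]
      · intro y hy
        simp only [SimpleGraph.Walk.support_cons, SimpleGraph.Walk.support_nil,
          List.mem_cons, List.mem_singleton, List.not_mem_nil, or_false] at hy
        tauto
      · have hl1 : (SimpleGraph.Walk.cons h SimpleGraph.Walk.nil : G.Walk w b).length = 1 := by
          simp
        rw [hl1]
        have := SimpleGraph.dist_le p'
        simp only [SimpleGraph.Walk.length_cons]
        omega
    · have hxb : x ≠ b := fun hh => hb (hh ▸ hx)
      obtain ⟨v, hv, q', hsupp, havoid, hlen⟩ := ih hx hxb
      refine ⟨v, hv, SimpleGraph.Walk.cons h q', ?_, ?_, ?_⟩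
      · intro y hy
        simp only [SimpleGraph.Walk.support_cons, List.mem_cons] at hy ⊢
        rcases hy with rfl | hy
        · left; rfl
        · right; exact hsupp y hy
      · intro y hy
        simp only [SimpleGraph.Walk.support_cons, List.mem_cons] at hy
        rcases hy with rfl | hy
        · left; rfl
        · rcases havoid y hy with rfl | h' | h'
          · right; right; exact hb
          · right; left; exact h'
          · right; right; exact h'
      · simp only [SimpleGraph.Walk.length_cons]
        omega

private lemma distDel_le_of_walk (q : G.Walk u v)
    (havoid : ∀ y ∈ q.support, y = u ∨ y = v ∨ y ∉ S) :
    distDel G (S \ {u}) u v ≤ (q.length : ℕ∞) := by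
  set A : Set V := (S \ {u}) \ ({u, v} : Set V) with hA
  have hnot : ∀ y ∈ q.support, y ∉ A := by
    intro y hy
    rcases havoid y hy with rfl | rfl | h'
    · intro hmem
      exact hmem.2 (by simp)
    · intro hmem
      exact hmem.2 (by simp)
    · intro hmem
      exact h' hmem.1.1
  have hedges : ∀ e ∈ q.edges, e ∈ (G.deleteSet A).edgeSet := by
    intro e
    induction e using Sym2.ind with
    | _ a b =>
      intro he
      have hadj : G.Adj a b := q.edges_subset_edgeSet he
      have ha : a ∈ q.support := SimpleGraph.Walk.fst_mem_support_of_mem_edges q he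
      have hb : b ∈ q.support := SimpleGraph.Walk.snd_mem_support_of_mem_edges q he
      exact (SimpleGraph.mem_edgeSet _).mpr (show G.Adj a b ∧ a ∉ A ∧ b ∉ A from ⟨hadj, hnot a ha, hnot b hb⟩)
  have := SimpleGraph.edist_le (q.transfer (G.deleteSet A) hedges)
  rwa [SimpleGraph.Walk.length_transfer] at this

private lemma exists_proj (hc : G.Connected) (hx : x ∈ S) (hne : x ≠ u) :
    ∃ v, v ∈ S ∧ v ≠ u ∧ distDel G (S \ {u}) u v ≠ ⊤ ∧
      (distDel G (S \ {u}) u v).toNat + G.dist v x ≤ G.dist u x := by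
  obtain ⟨p, hp, hlp⟩ := (hc u x).exists_path_of_dist
  cases p with
  | nil => exact absurd rfl hne
  | @cons _ b _ h p' =>
    have hup' : u ∉ p'.support := by
      have := hp.support_nodup
      simp only [SimpleGraph.Walk.support_cons, List.nodup_cons] at this
      exact this.1
    simp only [SimpleGraph.Walk.length_cons] at hlp
    have close : ∀ v, v ∈ S → v ≠ u → ∀ q : G.Walk u v,
        (∀ y ∈ q.support, y = u ∨ y = v ∨ y ∉ S) →
        q.length + G.dist v x ≤ G.dist u x →
        ∃ v, v ∈ S ∧ v ≠ u ∧ distDel G (S \ {u}) u v ≠ ⊤ ∧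
          (distDel G (S \ {u}) u v).toNat + G.dist v x ≤ G.dist u x := by
      intro v hv hvu q havoid hq
      have hD := distDel_le_of_walk q havoid
      have hDne : distDel G (S \ {u}) u v ≠ ⊤ :=
        fun hh => by simp [hh] at hD
      refine ⟨v, hv, hvu, hDne, ?_⟩
      have := ENat.toNat_le_toNat hD (by simp)
      simp only [ENat.toNat_coe] at this
      omega
    by_cases hb : b ∈ S
    · have hbu : b ≠ u := h.ne'
      refine close b hb hbu (SimpleGraph.Walk.cons h SimpleGraph.Walk.nil) ?_ ?_
      · intro y hy
        simp only [SimpleGraph.Walk.support_cons, SimpleGraph.Walk.support_nil,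
          List.mem_cons, List.mem_singleton, List.not_mem_nil, or_false] at hy
        tauto
      · have := SimpleGraph.dist_le p'
        simp only [SimpleGraph.Walk.length_cons, SimpleGraph.Walk.length_nil]
        omega
    · have hxb : x ≠ b := fun hh => hb (hh ▸ hx)
      obtain ⟨v, hv, q', hsupp, havoid, hlen⟩ := walk_proj S p' hx hxb
      have hvu : v ≠ u := by
        intro hh
        subst hh
        exact hup' (hsupp v q'.end_mem_support)
      refine close v hv hvu (SimpleGraph.Walk.cons h q') ?_ ?_
      · intro y hy
        simp only [SimpleGraph.Walk.support_cons, List.mem_cons] at hy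
        rcases hy with rfl | hy
        · left; rfl
        · rcases havoid y hy with rfl | h' | h'
          · right; right; exact hb
          · right; left; exact h'
          · right; right; exact h'
      · simp only [SimpleGraph.Walk.length_cons]
        omega

private lemma edist_le_distDel : G.edist u v ≤ distDel G (S \ {u}) u v := by
  apply SimpleGraph.edist_anti
  intro a b hab
  exact (show G.Adj a b ∧ _ from hab).1

private lemma Dle {j k : ℕ} (h : j ≤ k) :
    (3 * 2 ^ (k - j) - 2 : ℝ) ≤ (2⁻¹ : ℝ) ^ j * (3 * 2 ^ k - 2) := by
  have h2 : (2:ℝ) ^ (k - j) * 2 ^ j = 2 ^ k := by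
    rw [← pow_add]
    congr 1
    omega
  have hj1 : (1:ℝ) ≤ 2 ^ j := one_le_pow₀ (by norm_num)
  have hinv : (2⁻¹ : ℝ) ^ j = ((2:ℝ) ^ j)⁻¹ := by
    rw [inv_pow]
  have hjpos : (0:ℝ) < 2 ^ j := by positivity
  rw [hinv, inv_mul_eq_div, le_div_iff₀ hjpos]
  nlinarith [h2, hj1]

end AuxLemmas

set_option maxHeartbeats 2000000 in
/-- If `S` is an exponentially independent set of vertices of the infinite cubic tree,
then for every vertex `u ∈ S` there is a vertex `v ∈ S` with `f(v,S) ≥ 2·f(u,S)`. -/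
theorem stmt4 {V : Type*} (G : SimpleGraph V) (hG : IsInfCubicTree G)
    (S : Set V) (hS : ExpIndepSet G S) :
    ∀ u ∈ S, ∃ v ∈ S, 2 * ballDensity G S u ≤ ballDensity G S v := by
  intro u hu
  by_contra hcon
  push_neg at hcon
  obtain ⟨_, _, hc, _, hdeg⟩ := hG
  set f : V → ℝ := ballDensity G S with hf
  set a : V → ℕ → ℝ := fun v k =>
    ((S ∩ {x : V | G.edist v x ≤ (k : ℕ∞)}).ncard : ℝ) / (3 * 2 ^ k - 2) with ha
  have hfdef : ∀ v, f v = Filter.limsup (a v) Filter.atTop := fun v => rfl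
  -- basic facts about the ratios
  have hball : ∀ (v : V) (k : ℕ),
      {x : V | G.edist v x ≤ (k : ℕ∞)} = {x | G.dist v x ≤ k} := by
    intro v k
    ext x
    exact edist_le_iff_dist_le (hc v x)
  have hDpos : ∀ k : ℕ, (0:ℝ) < 3 * 2 ^ k - 2 := by
    intro k
    have : (1:ℝ) ≤ 2 ^ k := one_le_pow₀ (by norm_num)
    linarith
  have hballfin : ∀ (v : V) (k : ℕ), (S ∩ {x : V | G.edist v x ≤ (k : ℕ∞)}).Finite := by
    intro v k
    rw [hball]
    exact ((ball_bound hc hdeg v k).1).inter_of_right _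
  have hcardle : ∀ (v : V) (k : ℕ),
      ((S ∩ {x : V | G.edist v x ≤ (k : ℕ∞)}).ncard : ℝ) ≤ 3 * 2 ^ k - 2 := by
    intro v k
    have h1 : (S ∩ {x : V | G.edist v x ≤ (k : ℕ∞)}).ncard ≤
        ({x : V | G.dist v x ≤ k}).ncard := by
      rw [hball]
      exact Set.ncard_le_ncard Set.inter_subset_right (ball_bound hc hdeg v k).1
    have h2 := (ball_bound hc hdeg v k).2
    have h3 : ((S ∩ {x : V | G.edist v x ≤ (k : ℕ∞)}).ncard : ℝ) + 2 ≤ 3 * 2 ^ k := by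
      exact_mod_cast le_trans (by exact_mod_cast Nat.add_le_add_right h1 2) h2
    linarith
  have ha_nonneg : ∀ v k, 0 ≤ a v k := by
    intro v k
    exact div_nonneg (Nat.cast_nonneg _) (le_of_lt (hDpos k))
  have ha_le_one : ∀ v k, a v k ≤ 1 := by
    intro v k
    rw [ha]
    exact (div_le_one (hDpos k)).mpr (hcardle v k)
  have hbdd : ∀ v, Filter.IsBoundedUnder (· ≤ ·) Filter.atTop (a v) :=
    fun v => Filter.isBoundedUnder_of ⟨1, fun k => ha_le_one v k⟩
  have hcob : ∀ v, Filter.IsCoboundedUnder (· ≤ ·) Filter.atTop (a v) :=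
    fun v => Filter.isCoboundedUnder_le_of_eventually_le Filter.atTop
      (x := 0) (Filter.Eventually.of_forall (fun k => ha_nonneg v k))
  have hfu_pos : 0 < f u := by
    have := hcon u hu
    linarith
  -- the set of S-vertices visible from u in the deleted graph
  set C : Set V := {v | v ∈ S ∧ v ≠ u ∧ distDel G (S \ {u}) u v ≠ ⊤} with hC
  set j : V → ℕ := fun v => (distDel G (S \ {u}) u v).toNat with hj
  -- ENNReal weight comparison
  set efun : V → ℝ≥0∞ := C.indicator (fun v => (2⁻¹ : ℝ≥0∞) ^ j v) with hefun
  have hEle : ∑' v : V, 2 * efun v ≤ expWSet G (S \ {u}) u := by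
    have hsub : expWSet G (S \ {u}) u =
        ∑' v : V, (S \ {u}).indicator
          (fun v => if distDel G (S \ {u}) u v = ⊤ then 0
            else 2 * (2⁻¹ : ℝ≥0∞) ^ (distDel G (S \ {u}) u v).toNat) v := by
      rw [expWSet, ← tsum_subtype]
    rw [hsub]
    apply ENNReal.tsum_le_tsum
    intro v
    by_cases hvC : v ∈ C
    · have hvS : v ∈ S \ {u} := ⟨hvC.1, by simpa using hvC.2.1⟩
      rw [hefun, Set.indicator_of_mem hvC, Set.indicator_of_mem hvS,
        if_neg hvC.2.2]
    · rw [hefun, Set.indicator_of_notMem hvC, mul_zero]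
      exact zero_le
  set E : ℝ≥0∞ := ∑' v : V, efun v with hE
  have hE2 : 2 * E < 1 := by
    rw [hE, ← ENNReal.tsum_mul_left]
    exact lt_of_le_of_lt hEle (hS u hu)
  have hElt : E < 2⁻¹ := by
    by_contra hcontra
    push_neg at hcontra
    have : (1:ℝ≥0∞) ≤ 2 * E := by
      calc (1:ℝ≥0∞) = 2 * 2⁻¹ := by
            rw [ENNReal.mul_inv_cancel (by norm_num) (by norm_num)]
        _ ≤ 2 * E := mul_le_mul_right hcontra 2
    exact absurd hE2 (not_lt.mpr this)
  have hEne : E ≠ ⊤ := ne_top_of_lt (lt_of_lt_of_le hElt le_top)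
  -- real version
  set rfun : V → ℝ := C.indicator (fun v => (2⁻¹ : ℝ) ^ j v) with hrfun
  have hrtoReal : ∀ v, (efun v).toReal = rfun v := by
    intro v
    by_cases hvC : v ∈ C
    · rw [hefun, hrfun, Set.indicator_of_mem hvC, Set.indicator_of_mem hvC]
      simp [ENNReal.toReal_pow, ENNReal.toReal_inv]
    · rw [hefun, hrfun, Set.indicator_of_notMem hvC, Set.indicator_of_notMem hvC]
      simp
  have hsummable : Summable rfun := by
    have := ENNReal.summable_toReal (hE ▸ hEne)
    rwa [funext hrtoReal] at this
  have hrnonneg : ∀ v, 0 ≤ rfun v := by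
    intro v
    rw [hrfun]
    apply Set.indicator_nonneg
    intro x _
    positivity
  set t : ℝ := E.toReal with htdef
  have htsum : ∑' v, rfun v = t := by
    rw [htdef, hE, ENNReal.tsum_toReal_eq]
    · exact tsum_congr (fun v => (hrtoReal v).symm)
    · intro v
      rw [hefun]
      by_cases hvC : v ∈ C
      · rw [Set.indicator_of_mem hvC]
        exact (ENNReal.pow_lt_top (by simp [ENNReal.inv_lt_top])).ne
      · rw [Set.indicator_of_notMem hvC]
        simp
  have ht_lt : t < 1/2 := by
    have := (ENNReal.toReal_lt_toReal hEne (by norm_num : (2⁻¹:ℝ≥0∞) ≠ ⊤)).mpr hElt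
    simpa using this
  have ht_nonneg : 0 ≤ t := ENNReal.toReal_nonneg
  -- choose the tolerance and the finite set from summability
  set eps : ℝ := f u * (1 - 2*t) / 6 with heps
  have heps_pos : 0 < eps := by
    rw [heps]
    have h1 : 0 < 1 - 2*t := by linarith
    positivity
  obtain ⟨sF, hsF⟩ := hsummable.vanishing (Metric.ball_mem_nhds (0:ℝ) heps_pos)
  have hsFlt : ∀ tf : Finset V, Disjoint tf sF → ∑ v ∈ tf, rfun v < eps := by
    intro tf hdis
    have := hsF tf hdis
    rw [Metric.mem_ball, Real.dist_eq, sub_zero] at this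
    exact lt_of_le_of_lt (le_abs_self _) this
  set sF' : Finset V := sF.filter (fun v => v ∈ C) with hsF'
  have hsF'C : ∀ v ∈ sF', v ∈ C := by
    intro v hv
    exact (Finset.mem_filter.mp hv).2
  -- the key per-radius inequality
  have key : ∀ k : ℕ, 1 ≤ k → a u k ≤ 1/(3 * 2 ^ k - 2) +
      (∑ v ∈ sF', (2⁻¹:ℝ) ^ (j v) * a v (k - j v)) + 3/2 * eps := by
    intro k hk1
    set Dk : ℝ := 3 * 2 ^ k - 2 with hDk
    have hDkpos : 0 < Dk := hDpos k
    set Ck : Set V := {v | v ∈ C ∧ j v ≤ k} with hCk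
    have hCksub : Ck ⊆ {x | G.dist u x ≤ k} := by
      rintro v ⟨hvC, hjk⟩
      have h1 : G.edist u v ≤ distDel G (S \ {u}) u v := edist_le_distDel
      have h2 : distDel G (S \ {u}) u v = ((j v : ℕ) : ℕ∞) :=
        (ENat.coe_toNat hvC.2.2).symm
      have h3 : G.edist u v ≤ ((k : ℕ) : ℕ∞) := by
        rw [h2] at h1
        exact le_trans h1 (by exact_mod_cast hjk)
      exact (edist_le_iff_dist_le (hc u v)).mp h3
    have hCkfin : Ck.Finite := ((ball_bound hc hdeg u k).1).subset hCksub
    set CkF : Finset V := hCkfin.toFinset with hCkF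
    have hmemCkF : ∀ v, v ∈ CkF ↔ (v ∈ C ∧ j v ≤ k) := by
      intro v
      rw [hCkF, Set.Finite.mem_toFinset]
      exact Iff.rfl
    -- covering
    have hcover : (S ∩ {x : V | G.edist u x ≤ (k : ℕ∞)}) ⊆
        {u} ∪ ⋃ v ∈ CkF, (S ∩ {x : V | G.edist v x ≤ ((k - j v : ℕ) : ℕ∞)}) := by
      rintro x ⟨hxS, hxB⟩
      by_cases hxu : x = u
      · left; exact hxu
      · obtain ⟨v, hvS, hvu, hDne, harith⟩ := exists_proj hc hxS hxu
        have hdux : G.dist u x ≤ k := (edist_le_iff_dist_le (hc u x)).mp hxB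
        have hvC : v ∈ C := ⟨hvS, hvu, hDne⟩
        have hjeq : j v = (distDel G (S \ {u}) u v).toNat := rfl
        have hjk : j v ≤ k := by rw [hjeq]; omega
        have hdvx : G.dist v x ≤ k - j v := by rw [hjeq]; omega
        right
        refine Set.mem_biUnion ((hmemCkF v).mpr ⟨hvC, hjk⟩) ⟨hxS, ?_⟩
        exact (edist_le_iff_dist_le (hc v x)).mpr hdvx
    have hpieces : ∀ v ∈ CkF,
        (S ∩ {x : V | G.edist v x ≤ ((k - j v : ℕ) : ℕ∞)}).Finite :=
      fun v _ => hballfin v (k - j v)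
    obtain ⟨hUfin, hUcard⟩ := ncard_biUnion_le' CkF _ hpieces
    have hcard1 : (S ∩ {x : V | G.edist u x ≤ (k : ℕ∞)}).ncard ≤
        1 + ∑ v ∈ CkF, (S ∩ {x : V | G.edist v x ≤ ((k - j v : ℕ) : ℕ∞)}).ncard := by
      calc (S ∩ {x : V | G.edist u x ≤ (k : ℕ∞)}).ncard
          ≤ ({u} ∪ ⋃ v ∈ CkF, (S ∩ {x : V | G.edist v x ≤ ((k - j v : ℕ) : ℕ∞)})).ncard :=
            Set.ncard_le_ncard hcover ((Set.finite_singleton u).union hUfin)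
        _ ≤ ({u} : Set V).ncard +
            (⋃ v ∈ CkF, (S ∩ {x : V | G.edist v x ≤ ((k - j v : ℕ) : ℕ∞)})).ncard :=
            Set.ncard_union_le _ _
        _ ≤ 1 + ∑ v ∈ CkF, (S ∩ {x : V | G.edist v x ≤ ((k - j v : ℕ) : ℕ∞)}).ncard := by
            rw [Set.ncard_singleton]
            omega
    have hcard1R : ((S ∩ {x : V | G.edist u x ≤ (k : ℕ∞)}).ncard : ℝ) ≤
        1 + ∑ v ∈ CkF, ((S ∩ {x : V | G.edist v x ≤ ((k - j v : ℕ) : ℕ∞)}).ncard : ℝ) := by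
      exact_mod_cast hcard1
    -- split the sum
    set g : V → ℝ := fun v =>
      ((S ∩ {x : V | G.edist v x ≤ ((k - j v : ℕ) : ℕ∞)}).ncard : ℝ) with hg
    have hsplit : ∑ v ∈ CkF, g v = ∑ v ∈ CkF ∩ sF, g v + ∑ v ∈ CkF \ sF, g v :=
      (Finset.sum_inter_add_sum_sdiff CkF sF g).symm
    -- bound on the main part
    have hmain : ∑ v ∈ CkF ∩ sF, g v ≤
        (∑ v ∈ sF', (2⁻¹:ℝ) ^ (j v) * a v (k - j v)) * Dk := by
      have hterm : ∀ v ∈ CkF ∩ sF, g v ≤ ((2⁻¹:ℝ) ^ (j v) * a v (k - j v)) * Dk := by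
        intro v hv
        have hvCk := (hmemCkF v).mp (Finset.mem_inter.mp hv).1
        have hjk : j v ≤ k := hvCk.2
        set m : ℕ := k - j v with hm
        have hDm : (0:ℝ) < 3 * 2 ^ m - 2 := hDpos m
        have hgeq : g v = a v m * (3 * 2 ^ m - 2) := by
          simp only [hg, ha]
          exact (div_mul_cancel₀ _ (hDpos m).ne').symm
        rw [hgeq]
        calc a v m * (3 * 2 ^ m - 2)
            ≤ a v m * ((2⁻¹:ℝ) ^ (j v) * Dk) :=
              mul_le_mul_of_nonneg_left (by rw [hm, hDk]; exact Dle hjk) (ha_nonneg v m)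
          _ = ((2⁻¹:ℝ) ^ (j v) * a v m) * Dk := by ring
      calc ∑ v ∈ CkF ∩ sF, g v
          ≤ ∑ v ∈ CkF ∩ sF, ((2⁻¹:ℝ) ^ (j v) * a v (k - j v)) * Dk :=
            Finset.sum_le_sum hterm
        _ ≤ ∑ v ∈ sF', ((2⁻¹:ℝ) ^ (j v) * a v (k - j v)) * Dk := by
            apply Finset.sum_le_sum_of_subset_of_nonneg
            · intro v hv
              rw [hsF', Finset.mem_filter]
              exact ⟨(Finset.mem_inter.mp hv).2, ((hmemCkF v).mp (Finset.mem_inter.mp hv).1).1⟩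
            · intro v _ _
              have := ha_nonneg v (k - j v)
              positivity
        _ = (∑ v ∈ sF', (2⁻¹:ℝ) ^ (j v) * a v (k - j v)) * Dk := by
            rw [Finset.sum_mul]
    -- bound on the tail part
    have htail : ∑ v ∈ CkF \ sF, g v ≤ 3 * 2 ^ k * eps := by
      have hterm : ∀ v ∈ CkF \ sF, g v ≤ 3 * 2 ^ k * rfun v := by
        intro v hv
        have hvCk := (hmemCkF v).mp (Finset.mem_sdiff.mp hv).1
        have hjk : j v ≤ k := hvCk.2
        have hrv : rfun v = (2⁻¹:ℝ) ^ (j v) := by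
          rw [hrfun, Set.indicator_of_mem hvCk.1]
        have h2m : (2:ℝ) ^ (k - j v) = 2 ^ k * (2⁻¹:ℝ) ^ (j v) := by
          have h2 : (2:ℝ) ^ (k - j v) * 2 ^ (j v) = 2 ^ k := by
            rw [← pow_add]
            congr 1
            omega
          have hp : (0:ℝ) < 2 ^ (j v) := by positivity
          rw [inv_pow]
          field_simp
          linarith [h2]
        calc g v ≤ 3 * 2 ^ (k - j v) - 2 := hcardle v (k - j v)
          _ ≤ 3 * 2 ^ (k - j v) := by linarith
          _ = 3 * 2 ^ k * rfun v := by rw [h2m, hrv]; ring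
      calc ∑ v ∈ CkF \ sF, g v ≤ ∑ v ∈ CkF \ sF, 3 * 2 ^ k * rfun v :=
            Finset.sum_le_sum hterm
        _ = 3 * 2 ^ k * ∑ v ∈ CkF \ sF, rfun v := by rw [Finset.mul_sum]
        _ ≤ 3 * 2 ^ k * eps := by
            have hlt := hsFlt (CkF \ sF) (Finset.sdiff_disjoint)
            have hpow : (0:ℝ) < 3 * 2 ^ k := by positivity
            nlinarith [hlt]
    -- combine and divide
    have hfinal : ((S ∩ {x : V | G.edist u x ≤ (k : ℕ∞)}).ncard : ℝ) ≤
        (1/(3 * 2 ^ k - 2) + (∑ v ∈ sF', (2⁻¹:ℝ) ^ (j v) * a v (k - j v)) + 3/2 * eps) * Dk := by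
      have h2k : (2:ℝ) ≤ 2 ^ k := by
        calc (2:ℝ) = 2 ^ 1 := (pow_one 2).symm
        _ ≤ 2 ^ k := pow_le_pow_right₀ (by norm_num) hk1
      have hDk32 : 3 * 2 ^ k * eps ≤ 3/2 * eps * Dk := by
        rw [hDk]
        nlinarith [heps_pos, h2k]
      calc ((S ∩ {x : V | G.edist u x ≤ (k : ℕ∞)}).ncard : ℝ)
          ≤ 1 + ∑ v ∈ CkF, g v := hcard1R
        _ = 1 + (∑ v ∈ CkF ∩ sF, g v + ∑ v ∈ CkF \ sF, g v) := by rw [← hsplit]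
        _ ≤ 1 + ((∑ v ∈ sF', (2⁻¹:ℝ) ^ (j v) * a v (k - j v)) * Dk + 3 * 2 ^ k * eps) := by
            have := add_le_add hmain htail
            linarith
        _ ≤ (1/(3 * 2 ^ k - 2) + (∑ v ∈ sF', (2⁻¹:ℝ) ^ (j v) * a v (k - j v))
              + 3/2 * eps) * Dk := by
            have hone : (1:ℝ) = (1/(3 * 2 ^ k - 2)) * Dk := by
              rw [hDk]
              field_simp
              exact (div_self (hDpos k).ne').symm
            rw [add_mul, add_mul, ← hone]
            linarith [hDk32]
    show ((S ∩ {x : V | G.edist u x ≤ (k : ℕ∞)}).ncard : ℝ) / (3 * 2 ^ k - 2) ≤ _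
    rw [div_le_iff₀ hDkpos]
    exact hfinal
  -- pass to the limit superior
  set L : ℝ := eps + (∑ v ∈ sF', (2⁻¹:ℝ) ^ (j v) * (f v + eps)) + 3/2 * eps with hL
  have hev : ∀ᶠ k in Filter.atTop, a u k ≤ L := by
    have ev1 : ∀ᶠ k : ℕ in Filter.atTop, 1 ≤ k := Filter.eventually_ge_atTop 1
    have h2pow : Filter.Tendsto (fun k : ℕ => (2:ℝ) ^ k) Filter.atTop Filter.atTop :=
      tendsto_pow_atTop_atTop_of_one_lt (by norm_num)
    have hDtend : Filter.Tendsto (fun k : ℕ => (3:ℝ) * 2 ^ k - 2) Filter.atTop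
        Filter.atTop := by
      have h3 : Filter.Tendsto (fun k : ℕ => (3:ℝ) * 2 ^ k) Filter.atTop Filter.atTop :=
        h2pow.const_mul_atTop (by norm_num)
      simpa [sub_eq_add_neg] using Filter.tendsto_atTop_add_const_right Filter.atTop (-2:ℝ) h3
    have ev2 : ∀ᶠ k : ℕ in Filter.atTop, 1/((3:ℝ) * 2 ^ k - 2) ≤ eps := by
      have htend := hDtend.inv_tendsto_atTop
      have := htend.eventually (gt_mem_nhds heps_pos)
      exact this.mono (fun k hk => by
        rw [one_div]
        exact le_of_lt hk)
    have ev3 : ∀ᶠ k : ℕ in Filter.atTop, ∀ v ∈ sF', a v (k - j v) ≤ f v + eps := by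
      rw [Filter.eventually_all_finset]
      intro v _
      have hlim : Filter.limsup (a v) Filter.atTop < f v + eps := by
        rw [← hfdef v]
        linarith [heps_pos]
      have hevm := Filter.eventually_lt_of_limsup_lt hlim (hbdd v)
      exact ((Filter.tendsto_sub_atTop_nat (j v)).eventually hevm).mono
        (fun k hk => le_of_lt hk)
    filter_upwards [ev1, ev2, ev3] with k h1 h2 h3
    calc a u k ≤ 1/(3 * 2 ^ k - 2) +
        (∑ v ∈ sF', (2⁻¹:ℝ) ^ (j v) * a v (k - j v)) + 3/2 * eps := key k h1
      _ ≤ L := by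
        rw [hL]
        have hsum_le : ∑ v ∈ sF', (2⁻¹:ℝ) ^ (j v) * a v (k - j v) ≤
            ∑ v ∈ sF', (2⁻¹:ℝ) ^ (j v) * (f v + eps) := by
          apply Finset.sum_le_sum
          intro v hv
          exact mul_le_mul_of_nonneg_left (h3 v hv) (by positivity)
        linarith [h2, hsum_le]
  have hfu_le : f u ≤ L := by
    rw [hfdef u]
    exact Filter.limsup_le_of_le (hcob u) hev
  -- bound the sum by (2 f u + eps) * t
  have hsum_bound : ∑ v ∈ sF', (2⁻¹:ℝ) ^ (j v) * (f v + eps) ≤ (2 * f u + eps) * t := by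
    have hstep1 : ∑ v ∈ sF', (2⁻¹:ℝ) ^ (j v) * (f v + eps) ≤
        ∑ v ∈ sF', (2⁻¹:ℝ) ^ (j v) * (2 * f u + eps) := by
      apply Finset.sum_le_sum
      intro v hv
      have hfv : f v < 2 * f u := hcon v (hsF'C v hv).1
      exact mul_le_mul_of_nonneg_left (by linarith) (by positivity)
    have hstep2 : ∑ v ∈ sF', (2⁻¹:ℝ) ^ (j v) * (2 * f u + eps) =
        (∑ v ∈ sF', (2⁻¹:ℝ) ^ (j v)) * (2 * f u + eps) := by
      rw [Finset.sum_mul]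
    have hstep3 : ∑ v ∈ sF', (2⁻¹:ℝ) ^ (j v) ≤ t := by
      have hcongr : ∑ v ∈ sF', (2⁻¹:ℝ) ^ (j v) = ∑ v ∈ sF', rfun v := by
        apply Finset.sum_congr rfl
        intro v hv
        rw [hrfun, Set.indicator_of_mem (hsF'C v hv)]
      rw [hcongr, ← htsum]
      exact Summable.sum_le_tsum sF' (fun v _ => hrnonneg v) hsummable
    have hpos : (0:ℝ) ≤ 2 * f u + eps := by linarith [hfu_pos, heps_pos]
    calc ∑ v ∈ sF', (2⁻¹:ℝ) ^ (j v) * (f v + eps) ≤ _ := hstep1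
      _ = _ := hstep2
      _ ≤ (2 * f u + eps) * t := by
        rw [mul_comm]
        exact mul_le_mul_of_nonneg_left hstep3 hpos
  -- derive the contradiction
  have hfinal2 : f u ≤ eps + (2 * f u + eps) * t + 3/2 * eps := by
    rw [hL] at hfu_le
    linarith [hsum_bound]
  rw [heps] at hfinal2
  nlinarith [hfu_pos, ht_lt, ht_nonneg, hfinal2]
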